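/- For any integer r ≥ 1, sufficiently small ε > 0 (e.g. ε < (1/4)·log 3), and all x, t ∈ D_ε = {α ∈ ℂ : -ε ≤ Im(α) ≤ ε, -ε ≤ Re(α)}, the quantity |e^{((4r-1)/(4r))x}·e^{(1/(4r))t} / (e^x + e^t - 1)| is bounded by a constant that does not depend on ε, x, or t. -/

import Mathlib

open Complex Real

/-- The region `D_ε = {α ∈ ℂ : -ε ≤ Im α ≤ ε, -ε ≤ Re α}`. -/
def Deps (ε : ℝ) : Set ℂ := {α : ℂ | -ε ≤ α.im ∧ α.im ≤ ε ∧ -ε ≤ α.re}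

set_option maxHeartbeats 1200000 in
/-- For every `r ≥ 1`, for all `x, t ∈ D_ε` with `ε` sufficiently small
(e.g. `ε < (1/4)·log 3`), the quantity
`|e^{((4r-1)/(4r))x} e^{(1/(4r))t} / (e^x + e^t - 1)|` is bounded by a constant
independent of `ε`, `x`, `t`. -/
theorem bounded_4r :
    ∀ r : ℕ, 1 ≤ r → ∃ C : ℝ, ∀ ε : ℝ, 0 < ε → ε < (1/4) * Real.log 3 →
      ∀ x t : ℂ, x ∈ Deps ε → t ∈ Deps ε →
        ‖Complex.exp ((((4 * r - 1 : ℝ)) / (4 * r : ℝ)) * x) *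
            Complex.exp (((1 : ℝ) / (4 * r : ℝ)) * t) /
          (Complex.exp x + Complex.exp t - 1)‖ ≤ C := by
  intro r hr
  refine ⟨10, ?_⟩
  intro ε hε hεlt x t hx ht
  obtain ⟨hx1, hx2, hx3⟩ := hx
  obtain ⟨ht1, ht2, ht3⟩ := ht
  have hr1 : (1 : ℝ) ≤ (r : ℝ) := by exact_mod_cast hr
  have hr4 : (0 : ℝ) < 4 * (r : ℝ) := by linarith
  set a : ℝ := (4 * (r : ℝ) - 1) / (4 * (r : ℝ)) with ha_def
  set b : ℝ := 1 / (4 * (r : ℝ)) with hb_def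
  have ha : 0 ≤ a := by
    apply div_nonneg _ hr4.le; linarith
  have hb : 0 ≤ b := by positivity
  have hab : a + b = 1 := by
    rw [ha_def, hb_def]
    field_simp
    ring
  -- ε < 0.3
  have hlog : Real.log 3 < 1.2 := by
    rw [Real.log_lt_iff_lt_exp (by norm_num)]
    have h2 : Real.exp 1.2 = Real.exp 1 * Real.exp 0.2 := by
      rw [← Real.exp_add]; norm_num
    have h3 : (0.2 : ℝ) + 1 ≤ Real.exp 0.2 := Real.add_one_le_exp 0.2
    have h1 := Real.exp_one_gt_d9
    nlinarith [Real.exp_pos (1 : ℝ)]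
  have hε3 : ε < 0.3 := by linarith
  -- cosine lower bounds
  have hcosε : (0.955 : ℝ) ≤ Real.cos ε := by
    have := Real.one_sub_sq_div_two_le_cos (x := ε)
    nlinarith
  have hcos : ∀ z : ℂ, -ε ≤ z.im → z.im ≤ ε → Real.cos ε ≤ Real.cos z.im := by
    intro z h1 h2
    rw [← Real.cos_abs z.im]
    exact Real.cos_le_cos_of_nonneg_of_le_pi (abs_nonneg _)
      (by linarith [Real.pi_gt_three]) (abs_le.mpr ⟨h1, h2⟩)
  have hcosx := hcos x hx1 hx2
  have hcost := hcos t ht1 ht2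
  -- exponential lower bounds
  have hEu : (0.7 : ℝ) ≤ Real.exp x.re := by
    have h1 : Real.exp (-ε) ≤ Real.exp x.re := Real.exp_le_exp.mpr hx3
    have h2 : (-ε) + 1 ≤ Real.exp (-ε) := Real.add_one_le_exp _
    linarith
  have hEv : (0.7 : ℝ) ≤ Real.exp t.re := by
    have h1 : Real.exp (-ε) ≤ Real.exp t.re := Real.exp_le_exp.mpr ht3
    have h2 : (-ε) + 1 ≤ Real.exp (-ε) := Real.add_one_le_exp _
    linarith
  set Eu := Real.exp x.re with hEu_def
  set Ev := Real.exp t.re with hEv_def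
  -- numerator bound
  have hnum : ‖Complex.exp ((a : ℂ) * x) * Complex.exp ((b : ℂ) * t)‖
      = Real.exp (a * x.re + b * t.re) := by
    rw [norm_mul, Complex.norm_exp,
      Complex.norm_exp, ← Real.exp_add]
    congr 1
    simp [Complex.mul_re]
  have hconv := convexOn_exp.2 (Set.mem_univ x.re) (Set.mem_univ t.re) ha hb hab
  simp only [smul_eq_mul] at hconv
  have hnumle : Real.exp (a * x.re + b * t.re) ≤ Eu + Ev := by
    have h1 : a ≤ 1 := by linarith
    have h2 : b ≤ 1 := by linarith
    nlinarith [Real.exp_pos x.re, Real.exp_pos t.re]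
  -- denominator bound
  have hre : (Complex.exp x + Complex.exp t - 1).re
      = Eu * Real.cos x.im + Ev * Real.cos t.im - 1 := by
    simp [Complex.exp_re]; rfl
  have hden : 0.955 * (Eu + Ev) - 1 ≤ ‖Complex.exp x + Complex.exp t - 1‖ := by
    have h1 := Complex.re_le_norm (Complex.exp x + Complex.exp t - 1)
    rw [hre] at h1
    have p1 : 0.955 * Eu ≤ Eu * Real.cos x.im := by nlinarith
    have p2 : 0.955 * Ev ≤ Ev * Real.cos t.im := by nlinarith
    linarith
  have hdenpos : (0 : ℝ) < 0.955 * (Eu + Ev) - 1 := by linarith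
  have e1 : ((((4 * (r : ℝ) - 1) : ℝ) : ℂ) / (((4 * (r : ℝ)) : ℝ) : ℂ)) = (a : ℂ) := by
    rw [ha_def]; push_cast; ring
  have e2 : (((1 : ℝ) : ℂ) / (((4 * (r : ℝ)) : ℝ) : ℂ)) = (b : ℂ) := by
    rw [hb_def]; push_cast; ring
  rw [e1, e2, norm_div, hnum]
  rw [div_le_iff₀ (by linarith)]
  linarith
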